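/- Set θ̂ = √(A/(1+α)). There exist ε₀ > 0 and C > 0, depending only on A and C₀ and independent of T, such that if 0 < ε ≤ ε₀ then for every T > 0 and all (τ,y) ∈ [0,T] × [0,θ̂]: ζ̃(τ,y) ≤ max{C, (2/θ̂)·sup{ζ̃(τ′,θ̂) : τ′ ∈ [0,T]}}·y. -/

import Mathlib

open Real Filter MeasureTheory

/-- The potential V(y) = y²/16 + 1/4 + A/y² − (1+α)/2. -/
noncomputable def Vfun (A α y : ℝ) : ℝ :=
  y ^ 2 / 16 + 1 / 4 + A / y ^ 2 - (1 + α) / 2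

/-- The normalized ground state Q(y) = Z⁻¹·y^α·e^{−y²/8}. -/
noncomputable def Qfun (α Z y : ℝ) : ℝ :=
  Z⁻¹ * y ^ α * Real.exp (-y ^ 2 / 8)

/-- The error term 𝓔(τ,y) in the self-similar variables. -/
noncomputable def curlyE (α ε C₀ τ y : ℝ) : ℝ :=
  ε * Real.exp (-τ / 2) *
    (y ^ 2 / 4 - α * Real.log (1 + ε⁻¹ * Real.exp (τ / 2) * y) + Real.log C₀)

/-- A solution ζ̃ of the self-similar equation, with the regularity,
boundary, initial, integrability and decay assumptions of the context. -/
def SolTildeZeta (A α ε C₀ Z : ℝ) (ζ : ℝ → ℝ → ℝ) : Prop :=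
  ContinuousOn (fun p : ℝ × ℝ => ζ p.1 p.2) (Set.Ici 0 ×ˢ Set.Ici 0) ∧
  (∀ y > (0:ℝ), ContDiffOn ℝ 1 (fun τ => ζ τ y) (Set.Ioi 0)) ∧
  (∀ τ > (0:ℝ), ContDiffOn ℝ 2 (fun y => ζ τ y) (Set.Ioi 0)) ∧
  (∀ τ ≥ (0:ℝ), ∀ y ≥ (0:ℝ), 0 ≤ ζ τ y) ∧
  (∀ τ > (0:ℝ), ∀ y > (0:ℝ),
    deriv (fun s => ζ s y) τ - deriv (deriv (fun z => ζ τ z)) y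
        + Vfun A α y * ζ τ y =
      ε * (α + 1 / 2) * Real.exp (-τ / 2)
          * (deriv (fun z => ζ τ z) y - y / 4 * ζ τ y)
        + A * (1 / y ^ 2 - 1 / (y + curlyE α ε C₀ τ y) ^ 2) * ζ τ y) ∧
  (∀ τ > (0:ℝ), ζ τ 0 = 0) ∧
  (∀ y > (0:ℝ), ζ 0 y = Qfun α Z y) ∧
  (∀ τ ≥ (0:ℝ),
    MeasureTheory.IntegrableOn (fun y => (ζ τ y) ^ 2) (Set.Ioi 0) ∧
    MeasureTheory.IntegrableOn (fun y => (deriv (fun z => ζ τ z) y) ^ 2) (Set.Ioi 0) ∧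
    MeasureTheory.IntegrableOn (fun y => (y * ζ τ y) ^ 2) (Set.Ioi 0)) ∧
  (∀ T > (0:ℝ), ∀ δ > (0:ℝ), ∃ Y : ℝ, ∀ τ ∈ Set.Icc (0:ℝ) T, ∀ y ≥ Y,
    |ζ τ y| ≤ δ ∧ |deriv (fun z => ζ τ z) y| ≤ δ)

lemma log_le_two_sqrt {x : ℝ} (hx : 0 ≤ x) : Real.log (1+x) ≤ 2*Real.sqrt x := by
  have h1 : Real.sqrt (1+x) ≤ 1 + Real.sqrt x := by
    rw [show (1:ℝ)+Real.sqrt x = Real.sqrt ((1+Real.sqrt x)^2) from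
      (Real.sqrt_sq (by positivity)).symm]
    apply Real.sqrt_le_sqrt
    nlinarith [Real.sq_sqrt hx, Real.sqrt_nonneg x]
  have h2 : Real.log (1+x) = 2 * Real.log (Real.sqrt (1+x)) := by
    rw [Real.log_sqrt (by linarith)]; ring
  have h3 : Real.log (Real.sqrt (1+x)) ≤ Real.sqrt (1+x) - 1 :=
    Real.log_le_sub_one_of_pos (Real.sqrt_pos.mpr (by linarith))
  linarith

lemma curlyE_le {α ε C₀ τ y θ : ℝ} (hα : 0 < α) (hC₀ : 1 < C₀) (hε : 0 < ε)
    (hτ : 0 ≤ τ) (hy : 0 < y) (hyθ : y ≤ θ) :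
    curlyE α ε C₀ τ y ≤ ε * (θ^2/4 + Real.log C₀) := by
  have hX : 0 < ε⁻¹ * Real.exp (τ/2) * y := by positivity
  have hL : 0 ≤ Real.log (1 + ε⁻¹ * Real.exp (τ/2) * y) :=
    Real.log_nonneg (by linarith)
  have he : 0 < Real.exp (-τ/2) := Real.exp_pos _
  have he1 : Real.exp (-τ/2) ≤ 1 := Real.exp_le_one_iff.mpr (by linarith)
  have hlog : 0 < Real.log C₀ := Real.log_pos hC₀
  unfold curlyE
  have hy2 : y^2 ≤ θ^2 := by nlinarith
  have h1 : y ^ 2 / 4 - α * Real.log (1 + ε⁻¹ * Real.exp (τ / 2) * y) + Real.log C₀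
      ≤ θ^2/4 + Real.log C₀ := by nlinarith
  have hbnn : 0 ≤ θ^2/4 + Real.log C₀ := by positivity
  calc ε * Real.exp (-τ/2) * (y ^ 2 / 4 - α * Real.log (1 + ε⁻¹ * Real.exp (τ / 2) * y) + Real.log C₀)
      ≤ ε * Real.exp (-τ/2) * (θ^2/4 + Real.log C₀) :=
        mul_le_mul_of_nonneg_left h1 (le_of_lt (mul_pos hε he))
    _ ≤ ε * 1 * (θ^2/4 + Real.log C₀) := by
        apply mul_le_mul_of_nonneg_right _ hbnn
        nlinarith
    _ = ε * (θ^2/4 + Real.log C₀) := by ring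

lemma curlyE_ge {α ε C₀ τ y : ℝ} (hα : 0 < α) (hC₀ : 1 < C₀) (hε : 0 < ε)
    (hτ : 0 ≤ τ) (hy : 0 < y) :
    -(2*α*Real.sqrt (ε*y)) ≤ curlyE α ε C₀ τ y := by
  set X := ε⁻¹ * Real.exp (τ/2) * y with hXdef
  have hX : 0 < X := by positivity
  set e := Real.exp (-τ/2) with hedef
  have he : 0 < e := Real.exp_pos _
  have he1 : e ≤ 1 := Real.exp_le_one_iff.mpr (by linarith)
  have hlog : 0 < Real.log C₀ := Real.log_pos hC₀
  have hL : Real.log (1+X) ≤ 2*Real.sqrt X := log_le_two_sqrt hX.le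
  have key : ε * e * Real.sqrt X = Real.sqrt (ε * e * y) := by
    have h2 : ε * e * y = (ε*e)^2 * X := by
      have hee : e * e * Real.exp (τ/2) = e := by
        rw [hedef, ← Real.exp_add, ← Real.exp_add]; ring_nf
      have h4 : (ε*e)^2 * X = ε * (e*e*Real.exp (τ/2)) * y := by
        rw [hXdef]; field_simp
      rw [h4, hee]
    rw [h2, Real.sqrt_mul (sq_nonneg _), Real.sqrt_sq (by positivity)]
  have hmono : Real.sqrt (ε * e * y) ≤ Real.sqrt (ε * y) := by
    apply Real.sqrt_le_sqrt
    nlinarith [mul_le_mul_of_nonneg_right he1 (mul_pos hε hy).le]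
  have h3 : ε * e * (α * Real.log (1+X)) ≤ 2*α*Real.sqrt (ε*y) := by
    calc ε * e * (α * Real.log (1+X)) ≤ ε * e * (α * (2*Real.sqrt X)) := by
          apply mul_le_mul_of_nonneg_left _ (by positivity)
          exact mul_le_mul_of_nonneg_left hL hα.le
      _ = 2*α*(ε*e*Real.sqrt X) := by ring
      _ ≤ 2*α*Real.sqrt (ε*y) := by
          rw [key]; exact mul_le_mul_of_nonneg_left hmono (by positivity)
  unfold curlyE
  rw [← hXdef, ← hedef]
  nlinarith [mul_pos hε he, sq_nonneg y, mul_le_mul_of_nonneg_left hlog.le (mul_pos hε he).le,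
    mul_nonneg (mul_pos hε he).le (by positivity : (0:ℝ) ≤ y^2/4)]

lemma deriv_nonneg_of_left_le {f : ℝ → ℝ} {a : ℝ} (hf : DifferentiableAt ℝ f a)
    (h : ∀ᶠ t in nhdsWithin a (Set.Iio a), f t ≤ f a) : 0 ≤ deriv f a := by
  by_contra hneg
  push_neg at hneg
  have hslope := hasDerivAt_iff_tendsto_slope.mp hf.hasDerivAt
  have h2 : ∀ᶠ t in nhdsWithin a {a}ᶜ, slope f a t < 0 :=
    hslope.eventually (eventually_lt_nhds hneg)
  have hmono : nhdsWithin a (Set.Iio a) ≤ nhdsWithin a {a}ᶜ :=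
    nhdsWithin_mono a (fun t ht => ne_of_lt ht)
  have h3 := (h2.filter_mono hmono).and (h.and (eventually_mem_nhdsWithin))
  obtain ⟨t, hts, htf, hta⟩ := h3.exists
  rw [slope_def_field] at hts
  simp only [Set.mem_Iio] at hta
  rw [div_neg_iff] at hts
  rcases hts with ⟨h5,h6⟩|⟨h5,h6⟩ <;> linarith

lemma deriv_deriv_nonpos_of_isLocalMax {f : ℝ → ℝ} {x : ℝ} {s : Set ℝ}
    (hs : IsOpen s) (hxs : x ∈ s) (hd : ∀ y ∈ s, DifferentiableAt ℝ f y)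
    (hd2 : DifferentiableAt ℝ (deriv f) x) (hmax : IsLocalMax f x) :
    deriv (deriv f) x ≤ 0 := by
  by_contra hpos
  push_neg at hpos
  have hg0 : deriv f x = 0 := hmax.deriv_eq_zero
  have hslope := hasDerivAt_iff_tendsto_slope.mp hd2.hasDerivAt
  have h2 : ∀ᶠ t in nhdsWithin x {x}ᶜ, 0 < slope (deriv f) x t :=
    hslope.eventually (eventually_gt_nhds hpos)
  have hmono : nhdsWithin x (Set.Ioi x) ≤ nhdsWithin x {x}ᶜ :=
    nhdsWithin_mono x (fun t ht => (ne_of_gt ht))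
  have h3 : ∀ᶠ t in nhdsWithin x (Set.Ioi x), 0 < deriv f t := by
    filter_upwards [h2.filter_mono hmono, eventually_mem_nhdsWithin] with t h1 h4
    rw [slope_def_field, hg0, sub_zero] at h1
    simp only [Set.mem_Ioi] at h4
    have := mul_pos h1 (show (0:ℝ) < t - x by linarith)
    rwa [div_mul_cancel₀] at this
    linarith
  have h4 : ∀ᶠ t in nhdsWithin x (Set.Ioi x), t ∈ s :=
    eventually_nhdsWithin_of_eventually_nhds (hs.eventually_mem hxs)
  have h5 : ∀ᶠ t in nhdsWithin x (Set.Ioi x), f t ≤ f x :=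
    eventually_nhdsWithin_of_eventually_nhds hmax
  obtain ⟨b, hbx, hb⟩ := mem_nhdsGT_iff_exists_Ioc_subset.mp
    (h3.and (h4.and h5))
  have hsm : StrictMonoOn f (Set.Icc x b) := by
    apply strictMonoOn_of_deriv_pos (convex_Icc x b)
    · intro t ht
      rcases eq_or_lt_of_le ht.1 with h|hlt
      · exact (h ▸ (hd x hxs)).continuousAt.continuousWithinAt
      · exact ((hd t (hb ⟨hlt, ht.2⟩).2.1).continuousAt).continuousWithinAt
    · intro t ht
      rw [interior_Icc] at ht
      exact (hb ⟨ht.1, le_of_lt ht.2⟩).1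
  have := hsm (Set.left_mem_Icc.mpr (le_of_lt hbx)) (Set.right_mem_Icc.mpr (le_of_lt hbx)) hbx
  have hfb := (hb ⟨hbx, le_refl b⟩).2.2
  linarith


lemma arith1 {α ε η M R : ℝ} (hα : 1 < α) (hε : 0 < ε) (hM : 0 < M)
    (hη2 : η*(2*α+1) ≤ 2*ε)
    (h10 : 0 ≤ -(M*(ε*(((2*α+1)/4)*R + (α+1/2) + 2))) + ((2*α+1)/4)*(M*(ε*R+η))
      + ε*(α+1/2)*M) : False := by
  nlinarith [mul_le_mul_of_nonneg_left hη2 hM.le, mul_pos hM hε]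

lemma arith2 {α ε M R : ℝ} (hα : 1 < α) (hε : 0 < ε) (hM : 0 < M) (hRpos : 0 < R)
    (h10 : 0 ≤ -(M*(ε*(((2*α+1)/4)*R + (α+1/2) + 2))) + ε*(α+1/2)*M) : False := by
  nlinarith [mul_pos hM hε, mul_pos (mul_pos hM hε) hRpos]

lemma arith3 {α ε yb K : ℝ} (hα : 1 < α) (hε : 0 < ε) (hyb : 0 < yb) (hK : 0 < K)
    (hcase : ε*(7*K+4*α^2+1) < yb) : 4*α^2*(ε*yb) < yb^2 := by
  nlinarith [mul_lt_mul_of_pos_right hcase hyb, mul_pos (mul_pos hε hK) hyb,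
    mul_pos (mul_pos hε hyb) hyb]

lemma arith4 {α ε yb K : ℝ} (hα : 1 < α) (hε : 0 < ε) (hyb : 0 < yb) (hK : 0 < K)
    (hcase : ε*(7*K+4*α^2+1) < yb) : ε*K ≤ yb/7 := by
  nlinarith [mul_pos hε (show (0:ℝ) < 4*α^2+1 by positivity)]

lemma arith5 {yb Ev : ℝ} (h1 : 0 < yb+Ev) (h2 : yb+Ev ≤ yb + yb/7) (hyb : 0 < yb) :
    49/(64*yb^2) ≤ 1/(yb+Ev)^2 := by
  rw [div_le_div_iff₀ (by positivity) (by positivity)]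
  nlinarith

set_option maxHeartbeats 2000000 in
lemma main_bound (A α Z C₀ ε T M η θ K R B : ℝ)
    (hA : 0 < A) (hα : 1 < α) (hC₀ : 1 < C₀) (hZ : 0 < Z)
    (hθ : θ = Real.sqrt (A/(1+α)))
    (hK : K = (A/(1+α))/4 + Real.log C₀)
    (hR : R = 7*K + 4*α^2 + 1)
    (hB : B = ((2*α+1)/4)*R + (α+1/2) + 2)
    (hε : 0 < ε) (hεB : ε*(B*θ) ≤ 1)
    (hT : 0 < T)
    (ζ : ℝ → ℝ → ℝ) (hsol : SolTildeZeta A α ε C₀ Z ζ)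
    (hη : 0 < η) (hη2 : η*(2*α+1) ≤ 2*ε)
    (hM : 0 < M) (hMQ : 2*Z⁻¹*θ^(α-(1:ℝ)) ≤ M)
    (hMb : ∀ τ ∈ Set.Icc (0:ℝ) T, ζ τ θ ≤ M*(θ/2)) :
    ∀ τ ∈ Set.Icc (0:ℝ) T, ∀ y ∈ Set.Icc (0:ℝ) θ,
      ζ τ y < M*((y - ε*B*y^2/2) + η) := by
  obtain ⟨hcont, hτreg, hyreg, hnonneg, hPDE, hbd0, hinit, -, -⟩ := hsol
  have h1α : (0:ℝ) < 1+α := by linarith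
  have hθpos : 0 < θ := hθ ▸ Real.sqrt_pos.mpr (div_pos hA h1α)
  have hθsq : θ^2 = A/(1+α) := by rw [hθ]; exact Real.sq_sqrt (le_of_lt (div_pos hA h1α))
  have hlogC₀ : 0 < Real.log C₀ := Real.log_pos hC₀
  have hKpos : 0 < K := by rw [hK, ← hθsq]; positivity
  have hRpos : 0 < R := by nlinarith
  have hβpos : (0:ℝ) < (2*α+1)/4 := by linarith
  have hBpos : 0 < B := by nlinarith
  -- value of ζ at the corner
  have hζ00 : ζ 0 0 = 0 := by
    have hcw := (hcont (0,0) ⟨Set.self_mem_Ici, Set.self_mem_Ici⟩).tendsto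
    have hseq : Tendsto (fun n : ℕ => ((1/((n:ℝ)+1), (0:ℝ)) : ℝ × ℝ)) atTop
        (nhdsWithin ((0:ℝ),(0:ℝ)) (Set.Ici 0 ×ˢ Set.Ici 0)) := by
      apply tendsto_nhdsWithin_of_tendsto_nhds_of_eventually_within
      · exact tendsto_one_div_add_atTop_nhds_zero_nat.prodMk_nhds tendsto_const_nhds
      · apply Filter.Eventually.of_forall
        intro n
        constructor
        · have : (0:ℝ) < 1/((n:ℝ)+1) := by positivity
          exact le_of_lt this
        · exact Set.self_mem_Ici
    have hlim := hcw.comp hseq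
    have hzero : (fun n : ℕ => ζ (1/((n:ℝ)+1)) 0) = fun _ => (0:ℝ) := by
      funext n
      exact hbd0 _ (by positivity)
    have : Tendsto (fun _ : ℕ => (0:ℝ)) atTop (nhds (ζ 0 0)) := by
      rw [← hzero]; exact hlim
    exact tendsto_nhds_unique this tendsto_const_nhds
  -- barrier basic bounds
  have hwhalf : ∀ y ∈ Set.Icc (0:ℝ) θ, y/2 ≤ y - ε*B*y^2/2 := by
    intro y hy
    have h1 : ε*B*y ≤ 1 := by nlinarith [hy.1, hy.2, mul_pos hε hBpos]
    nlinarith [hy.1, mul_nonneg hy.1 (sub_nonneg.mpr h1)]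
  have hwle : ∀ y : ℝ, 0 ≤ y → y - ε*B*y^2/2 ≤ y := by
    intro y hy
    nlinarith [sq_nonneg y, mul_pos hε hBpos]
  -- strict bound at initial time
  have hinit' : ∀ y ∈ Set.Icc (0:ℝ) θ, ζ 0 y < M*((y - ε*B*y^2/2) + η) := by
    intro y hy
    rcases eq_or_lt_of_le hy.1 with h0|h0
    · rw [← h0, hζ00]
      have hexpr : (0:ℝ) - ε*B*(0:ℝ)^2/2 = 0 := by ring
      rw [hexpr, zero_add]
      exact mul_pos hM hη
    · rw [hinit y h0]
      have hexp : Real.exp (-y^2/8) ≤ 1 := Real.exp_le_one_iff.mpr (by nlinarith)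
      have hypow : y^α = y^(α-(1:ℝ)) * y := by
        have h2 := Real.rpow_add h0 (α-1) 1
        rw [Real.rpow_one] at h2
        rw [show α-1+1 = α by ring] at h2
        exact h2
      have hple : y^(α-(1:ℝ)) ≤ θ^(α-(1:ℝ)) :=
        Real.rpow_le_rpow h0.le hy.2 (by linarith)
      have hQle : Qfun α Z y ≤ Z⁻¹ * θ^(α-(1:ℝ)) * y := by
        unfold Qfun
        have hnn : 0 ≤ Z⁻¹ * y^α := by positivity
        calc Z⁻¹ * y^α * Real.exp (-y^2/8) ≤ Z⁻¹ * y^α * 1 :=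
              mul_le_mul_of_nonneg_left hexp hnn
          _ = Z⁻¹ * (y^(α-(1:ℝ)) * y) := by rw [← hypow]; ring
          _ ≤ Z⁻¹ * (θ^(α-(1:ℝ)) * y) := by
              apply mul_le_mul_of_nonneg_left _ (by positivity)
              exact mul_le_mul_of_nonneg_right hple h0.le
          _ = Z⁻¹ * θ^(α-(1:ℝ)) * y := by ring
      have h2 : Z⁻¹ * θ^(α-(1:ℝ)) * y ≤ (M/2)*y := by
        apply mul_le_mul_of_nonneg_right _ h0.le
        linarith
      have h3 : (M/2)*y ≤ M*(y - ε*B*y^2/2) := by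
        have := hwhalf y hy
        nlinarith
      have h4 : 0 < M*η := mul_pos hM hη
      linarith
  -- main contradiction setup
  by_contra hcon
  push_neg at hcon
  obtain ⟨τ₀, hτ₀, y₀, hy₀, hcon⟩ := hcon
  set K2 := Set.Icc (0:ℝ) T ×ˢ Set.Icc (0:ℝ) θ with hK2def
  have hK2sub : K2 ⊆ Set.Ici 0 ×ˢ Set.Ici 0 := by
    rintro ⟨a,b⟩ ⟨ha, hb⟩
    exact ⟨ha.1, hb.1⟩
  set v : ℝ×ℝ → ℝ := fun p => ζ p.1 p.2 - M*((p.2 - ε*B*p.2^2/2) + η) with hvdef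
  have hvcont : ContinuousOn v K2 := by
    apply ContinuousOn.sub (hcont.mono hK2sub)
    fun_prop
  set E := K2 ∩ v ⁻¹' (Set.Ici 0) with hEdef
  have hEne : E.Nonempty := by
    refine ⟨(τ₀,y₀), ⟨⟨hτ₀, hy₀⟩, ?_⟩⟩
    simp only [Set.mem_preimage, Set.mem_Ici, hvdef]
    linarith
  have hK2comp : IsCompact K2 := isCompact_Icc.prod isCompact_Icc
  have hEclosed : IsClosed E :=
    hvcont.preimage_isClosed_of_isClosed (isClosed_Icc.prod isClosed_Icc) isClosed_Ici
  have hEcomp : IsCompact E := hK2comp.of_isClosed_subset hEclosed Set.inter_subset_left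
  obtain ⟨⟨tb, yb⟩, hpE, hpmin⟩ := hEcomp.exists_isMinOn hEne continuous_fst.continuousOn
  have hpmin' : ∀ q ∈ E, tb ≤ q.1 := fun q hq => hpmin hq
  obtain ⟨⟨htbmem, hybmem⟩, hv0⟩ := hpE
  dsimp only at htbmem hybmem
  simp only [Set.mem_preimage, Set.mem_Ici] at hv0
  have hbefore : ∀ q ∈ K2, q.1 < tb → v q < 0 := by
    intro q hq hlt
    by_contra hge
    push_neg at hge
    exact absurd (hpmin' q ⟨hq, hge⟩) (not_le.mpr hlt)
  have htbpos : 0 < tb := by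
    rcases eq_or_lt_of_le htbmem.1 with h|h
    · exfalso
      have h1 := hinit' yb hybmem
      rw [← h] at hv0
      simp only [hvdef] at hv0
      linarith
    · exact h
  have hatmost : ∀ y ∈ Set.Icc (0:ℝ) θ, v (tb, y) ≤ 0 := by
    intro y hy
    have hseq : Tendsto (fun n : ℕ => ((tb - tb/((n:ℝ)+2), y) : ℝ × ℝ)) atTop
        (nhdsWithin (tb,y) K2) := by
      apply tendsto_nhdsWithin_of_tendsto_nhds_of_eventually_within
      · have h2 : Tendsto (fun n : ℕ => tb/((n:ℝ)+2)) atTop (nhds 0) := by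
          apply Tendsto.div_atTop tendsto_const_nhds
          exact tendsto_atTop_add_const_right _ 2 tendsto_natCast_atTop_atTop
        have h1 : Tendsto (fun n : ℕ => tb - tb/((n:ℝ)+2)) atTop (nhds tb) := by
          have := tendsto_const_nhds.sub h2 (α := ℕ) (f := fun _ => tb)
          simpa using this
        exact h1.prodMk_nhds tendsto_const_nhds
      · apply Filter.Eventually.of_forall
        intro n
        have hn2 : (0:ℝ) < (n:ℝ)+2 := by positivity
        have hd1 : 0 ≤ tb/((n:ℝ)+2) := by positivity
        have hd2 : tb/((n:ℝ)+2) ≤ tb := by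
          rw [div_le_iff₀ hn2]
          nlinarith
        exact ⟨⟨by linarith, by linarith [htbmem.2]⟩, hy⟩
    have hlim : Tendsto (fun n : ℕ => v (tb - tb/((n:ℝ)+2), y)) atTop (nhds (v (tb,y))) :=
      ((hvcont (tb,y) ⟨htbmem, hy⟩).tendsto).comp hseq
    apply le_of_tendsto hlim
    apply Filter.Eventually.of_forall
    intro n
    have hn2 : (0:ℝ) < (n:ℝ)+2 := by positivity
    have hd1 : 0 < tb/((n:ℝ)+2) := by positivity
    have hd2 : tb/((n:ℝ)+2) ≤ tb := by
      rw [div_le_iff₀ hn2]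
      nlinarith
    apply le_of_lt
    apply hbefore _ ⟨⟨by linarith, by linarith [htbmem.2]⟩, hy⟩
    simp only
    linarith
  have hveqz : v (tb, yb) = 0 := le_antisymm (hatmost yb hybmem) hv0
  have hybpos : 0 < yb := by
    rcases eq_or_lt_of_le hybmem.1 with h|h
    · exfalso
      have h0 : ζ tb 0 = 0 := hbd0 tb htbpos
      have hlt : v (tb, yb) < 0 := by
        simp only [hvdef]
        rw [← h, h0]
        nlinarith [mul_pos hM hη]
      linarith
    · exact h
  have hybθ : yb < θ := by
    rcases eq_or_lt_of_le hybmem.2 with h|h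
    · exfalso
      have h1 := hMb tb htbmem
      have h2 := hwhalf θ ⟨hθpos.le, le_refl θ⟩
      have hlt : v (tb, yb) < 0 := by
        simp only [hvdef]
        rw [h]
        nlinarith [mul_pos hM hη, mul_le_mul_of_nonneg_left h2 hM.le]
      linarith
    · exact h
  -- differentiability facts
  have hfC2 : ContDiffOn ℝ 2 (fun z => ζ tb z) (Set.Ioi 0) := hyreg tb htbpos
  have hfdiff : ∀ z ∈ Set.Ioi (0:ℝ), DifferentiableAt ℝ (fun z => ζ tb z) z := by
    intro z hz
    exact (hfC2.differentiableOn (by norm_num)).differentiableAt (isOpen_Ioi.mem_nhds hz)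
  have hf' : ContDiffOn ℝ 1 (deriv (fun z => ζ tb z)) (Set.Ioi 0) :=
    hfC2.deriv_of_isOpen isOpen_Ioi (by norm_num)
  have hf'diff : DifferentiableAt ℝ (deriv (fun z => ζ tb z)) yb :=
    (hf'.differentiableOn (by norm_num)).differentiableAt (isOpen_Ioi.mem_nhds hybpos)
  have hgdiff : DifferentiableAt ℝ (fun s => ζ s yb) tb := by
    have h1 := hτreg yb hybpos
    exact (h1.differentiableOn (by norm_num)).differentiableAt (isOpen_Ioi.mem_nhds htbpos)
  have hζbar : ζ tb yb = M*((yb - ε*B*yb^2/2) + η) := by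
    have h := hveqz
    simp only [hvdef] at h
    linarith
  -- τ derivative nonneg at the first-touch point
  have hgle : ∀ᶠ t in nhdsWithin tb (Set.Iio tb),
      (fun s => ζ s yb) t ≤ (fun s => ζ s yb) tb := by
    filter_upwards [Ioo_mem_nhdsLT_of_mem
      (show tb ∈ Set.Ioc 0 tb from ⟨htbpos, le_refl tb⟩)] with t ht
    have hvt : v (t, yb) < 0 :=
      hbefore (t, yb) ⟨⟨ht.1.le, le_trans ht.2.le htbmem.2⟩, hybmem⟩ ht.2
    simp only [hvdef] at hvt
    show ζ t yb ≤ ζ tb yb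
    linarith
  have hd1 : 0 ≤ deriv (fun s => ζ s yb) tb := deriv_nonneg_of_left_le hgdiff hgle
  -- local max in y
  have hlocmax : IsLocalMax (fun z => ζ tb z - M*((z - ε*B*z^2/2) + η)) yb := by
    have hIcc : Set.Icc (0:ℝ) θ ∈ nhds yb := Icc_mem_nhds hybpos hybθ
    filter_upwards [hIcc] with z hz
    have h1 := hatmost z hz
    simp only [hvdef] at h1
    show ζ tb z - M*((z - ε*B*z^2/2) + η) ≤ ζ tb yb - M*((yb - ε*B*yb^2/2) + η)
    linarith
  have hP : ∀ z : ℝ, HasDerivAt (fun z => M*((z - ε*B*z^2/2) + η)) (M*(1 - ε*B*z)) z := by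
    intro z
    have h1 : HasDerivAt (fun z : ℝ => z) 1 z := hasDerivAt_id z
    have h2 : HasDerivAt (fun z : ℝ => ε*B*z^2) ((ε*B)*((2:ℕ)*z^1)) z :=
      (hasDerivAt_pow 2 z).const_mul (ε*B)
    have h3 := (h1.sub (h2.div_const 2)).add_const η
    have h4 := h3.const_mul M
    refine h4.congr_deriv ?_
    push_cast
    ring
  have hdφ0 : deriv (fun z => ζ tb z - M*((z - ε*B*z^2/2) + η)) yb = 0 :=
    hlocmax.deriv_eq_zero
  have hφder : HasDerivAt (fun z => ζ tb z - M*((z - ε*B*z^2/2) + η))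
      (deriv (fun z => ζ tb z) yb - M*(1 - ε*B*yb)) yb :=
    ((hfdiff yb hybpos).hasDerivAt).sub (hP yb)
  have hdy : deriv (fun z => ζ tb z) yb = M*(1-ε*B*yb) := by
    have h1 := hφder.deriv
    rw [hdφ0] at h1
    linarith
  have hlin : ∀ z:ℝ, HasDerivAt (fun z : ℝ => M*(1 - ε*B*z)) (-(M*(ε*B))) z := by
    intro z
    have h1 := ((hasDerivAt_id z).const_mul (ε*B)).const_sub 1
    have h2 := h1.const_mul M
    refine h2.congr_deriv ?_
    ring
  have hφdiff : ∀ z ∈ Set.Ioi (0:ℝ),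
      DifferentiableAt ℝ (fun z => ζ tb z - M*((z - ε*B*z^2/2) + η)) z :=
    fun z hz => (hfdiff z hz).sub (hP z).differentiableAt
  have hEq : deriv (fun z => ζ tb z - M*((z - ε*B*z^2/2) + η)) =ᶠ[nhds yb]
      (fun z => deriv (fun z => ζ tb z) z - M*(1 - ε*B*z)) := by
    filter_upwards [isOpen_Ioi.mem_nhds hybpos] with z hz
    exact ((hfdiff z hz).hasDerivAt.sub (hP z)).deriv
  have hψdiff : DifferentiableAt ℝ (fun z => deriv (fun z => ζ tb z) z - M*(1 - ε*B*z)) yb :=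
    hf'diff.sub (hlin yb).differentiableAt
  have hφ'diff : DifferentiableAt ℝ (deriv (fun z => ζ tb z - M*((z - ε*B*z^2/2) + η))) yb :=
    hEq.differentiableAt_iff.mpr hψdiff
  have h2nd : deriv (deriv (fun z => ζ tb z - M*((z - ε*B*z^2/2) + η))) yb ≤ 0 :=
    deriv_deriv_nonpos_of_isLocalMax isOpen_Ioi hybpos hφdiff hφ'diff hlocmax
  have hder2eq : deriv (deriv (fun z => ζ tb z - M*((z - ε*B*z^2/2) + η))) yb
      = deriv (deriv (fun z => ζ tb z)) yb + M*(ε*B) := by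
    rw [hEq.deriv_eq, show deriv (fun z => deriv (fun z => ζ tb z) z - M*(1 - ε*B*z)) yb = _ from (hf'diff.hasDerivAt.sub (hlin yb)).deriv]
    ring
  have hdyy : deriv (deriv (fun z => ζ tb z)) yb ≤ -(M*(ε*B)) := by
    rw [hder2eq] at h2nd
    linarith
  -- PDE at the point and curlyE bounds
  have hpde := hPDE tb htbpos yb hybpos
  have hαpos : (0:ℝ) < α := by linarith
  have hElb := curlyE_ge hαpos hC₀ hε htbmem.1 hybpos
  have hEub' := curlyE_le hαpos hC₀ hε htbmem.1 hybpos hybmem.2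
  set Ev := curlyE α ε C₀ tb yb with hEvdef
  have hEub : Ev ≤ ε*K := by
    rw [hK, ← hθsq]
    exact hEub'
  have hrearr : deriv (fun s => ζ s yb) tb = deriv (deriv (fun z => ζ tb z)) yb
      - (Vfun A α yb - A*(1/yb^2 - 1/(yb+Ev)^2))*(ζ tb yb)
      + ε*(α+1/2)*Real.exp (-tb/2)*(deriv (fun z => ζ tb z) yb - yb/4*(ζ tb yb)) := by
    linear_combination hpde
  have heb : Real.exp (-tb/2) ≤ 1 := Real.exp_le_one_iff.mpr (by linarith)
  have hepos : (0:ℝ) < Real.exp (-tb/2) := Real.exp_pos _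
  have hcform : Vfun A α yb - A*(1/yb^2 - 1/(yb+Ev)^2)
      = yb^2/16 + 1/4 - (1+α)/2 + A*(1/(yb+Ev)^2) := by
    unfold Vfun
    ring
  have hinvnn : (0:ℝ) ≤ 1/(yb+Ev)^2 := by positivity
  have hzsnn : 0 ≤ ζ tb yb := hnonneg tb htbmem.1 yb hybpos.le
  have hSpos : (0:ℝ) < α + 1/2 := by linarith
  -- the epsilon term bound
  have hterm : ε*(α+1/2)*Real.exp (-tb/2)*(deriv (fun z => ζ tb z) yb - yb/4*(ζ tb yb))
      ≤ ε*(α+1/2)*M := by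
    have hXle : deriv (fun z => ζ tb z) yb - yb/4*(ζ tb yb) ≤ M := by
      rw [hdy]
      have h5 : 0 ≤ yb/4*(ζ tb yb) := mul_nonneg (by positivity) hzsnn
      linarith [mul_nonneg (mul_nonneg hM.le (mul_pos hε hBpos).le) hybpos.le, h5]
    rcases le_or_gt (deriv (fun z => ζ tb z) yb - yb/4*(ζ tb yb)) 0 with h|h
    · have h6 : ε*(α+1/2)*Real.exp (-tb/2)*(deriv (fun z => ζ tb z) yb - yb/4*(ζ tb yb)) ≤ 0 :=
        mul_nonpos_of_nonneg_of_nonpos (by positivity) h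
      linarith [mul_pos (mul_pos hε hSpos) hM]
    · calc ε*(α+1/2)*Real.exp (-tb/2)*(deriv (fun z => ζ tb z) yb - yb/4*(ζ tb yb))
          ≤ ε*(α+1/2)*1*(deriv (fun z => ζ tb z) yb - yb/4*(ζ tb yb)) := by
            apply mul_le_mul_of_nonneg_right _ h.le
            exact mul_le_mul_of_nonneg_left heb (mul_pos hε hSpos).le
        _ = ε*(α+1/2)*(deriv (fun z => ζ tb z) yb - yb/4*(ζ tb yb)) := by ring
        _ ≤ ε*(α+1/2)*M := mul_le_mul_of_nonneg_left hXle (by positivity)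
  -- case analysis on yb
  rcases le_or_gt yb (ε*R) with hcase|hcase
  · -- small yb : crude coefficient bound
    have hclb : -((2*α+1)/4) ≤ Vfun A α yb - A*(1/yb^2 - 1/(yb+Ev)^2) := by
      rw [hcform]
      linarith [sq_nonneg yb, mul_nonneg hA.le hinvnn]
    have h6 : -((Vfun A α yb - A*(1/yb^2 - 1/(yb+Ev)^2)) * (ζ tb yb))
        ≤ ((2*α+1)/4)*(ζ tb yb) := by
      have h5 := mul_le_mul_of_nonneg_right hclb hzsnn
      linarith
    have h7 : ζ tb yb ≤ M*(ε*R + η) := by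
      rw [hζbar]
      apply mul_le_mul_of_nonneg_left _ hM.le
      have h8 := hwle yb hybpos.le
      linarith
    have h9 : ((2*α+1)/4)*(ζ tb yb) ≤ ((2*α+1)/4)*(M*(ε*R + η)) :=
      mul_le_mul_of_nonneg_left h7 hβpos.le
    have h10 : 0 ≤ -(M*(ε*B)) + ((2*α+1)/4)*(M*(ε*R+η)) + ε*(α+1/2)*M := by
      linarith [hd1, hrearr, hdyy, h6, h9, hterm]
    rw [hB] at h10
    exact arith1 hα hε hM hη2 h10
  · -- large yb : nonnegative coefficient
    have hsq : (2*α*Real.sqrt (ε*yb))^2 = 4*α^2*(ε*yb) := by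
      rw [mul_pow, Real.sq_sqrt (by positivity)]
      ring
    rw [hR] at hcase
    have hstep : 2*α*Real.sqrt (ε*yb) < yb := by
      have hlt2 : (2*α*Real.sqrt (ε*yb))^2 < yb^2 := by
        rw [hsq]
        exact arith3 hα hε hybpos hKpos hcase
      exact lt_of_pow_lt_pow_left₀ 2 hybpos.le hlt2
    have hypos2 : 0 < yb + Ev := by linarith
    have hub2 : yb + Ev ≤ yb + yb/7 := by
      have h9 : ε*K ≤ yb/7 := arith4 hα hε hybpos hKpos hcase
      linarith
    have hinvge : 49/(64*yb^2) ≤ 1/(yb+Ev)^2 := arith5 hypos2 hub2 hybpos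
    have hAyb : 1+α ≤ A/yb^2 := by
      rw [le_div_iff₀ (by positivity)]
      have h11 : yb^2 ≤ θ^2 := pow_le_pow_left₀ hybpos.le hybmem.2 2
      rw [hθsq] at h11
      have h12 : (1+α)*(A/(1+α)) = A := by field_simp
      linarith [mul_le_mul_of_nonneg_left h11 h1α.le]
    have hcpos : 0 ≤ Vfun A α yb - A*(1/yb^2 - 1/(yb+Ev)^2) := by
      rw [hcform]
      have h11 : A*(49/(64*yb^2)) ≤ A*(1/(yb+Ev)^2) :=
        mul_le_mul_of_nonneg_left hinvge hA.le
      have h12 : 49/64*(1+α) ≤ A*(49/(64*yb^2)) := by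
        have h13 : A*(49/(64*yb^2)) = 49/64*(A/yb^2) := by ring
        rw [h13]
        linarith [hAyb]
      linarith [sq_nonneg yb, h11, h12]
    have h6 : -((Vfun A α yb - A*(1/yb^2 - 1/(yb+Ev)^2)) * (ζ tb yb)) ≤ 0 := by
      have h5 := mul_nonneg hcpos hzsnn
      linarith
    have h10 : 0 ≤ -(M*(ε*B)) + ε*(α+1/2)*M := by
      linarith [hd1, hrearr, hdyy, h6, hterm]
    rw [hB] at h10
    exact arith2 hα hε hM hRpos h10


set_option maxHeartbeats 1000000

/-- bound ζ̃(τ,y) ≲ y near the origin. -/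
theorem stmt_13 (A α Z : ℝ) (hA : 0 < A) (hα : 1 < α) (hαA : α * (α - 1) = A)
    (hZ : 0 < Z) (hnorm : ∫ y in Set.Ioi (0:ℝ), (Qfun α Z y) ^ 2 = 1)
    (C₀ : ℝ) (hC₀ : 1 < C₀) :
    ∃ ε₀ > (0:ℝ), ∃ C > (0:ℝ), ∀ ε : ℝ, 0 < ε → ε ≤ ε₀ →
      ∀ ζ : ℝ → ℝ → ℝ, SolTildeZeta A α ε C₀ Z ζ →
        ∀ T > (0:ℝ), ∀ τ ∈ Set.Icc (0:ℝ) T,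
          ∀ y ∈ Set.Icc (0:ℝ) (Real.sqrt (A / (1 + α))),
            ζ τ y ≤ max C (2 / Real.sqrt (A / (1 + α)) *
                sSup ((fun τ' => ζ τ' (Real.sqrt (A / (1 + α)))) '' Set.Icc (0:ℝ) T))
              * y := by
  have h1α : (0:ℝ) < 1 + α := by linarith
  have hθpos0 : 0 < Real.sqrt (A/(1+α)) := Real.sqrt_pos.mpr (div_pos hA h1α)
  set θ := Real.sqrt (A/(1+α)) with hθdef
  have hθpos : 0 < θ := hθpos0
  set K := (A/(1+α))/4 + Real.log C₀ with hKdef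
  set R := 7*K + 4*α^2 + 1 with hRdef
  set B := ((2*α+1)/4)*R + (α+1/2) + 2 with hBdef
  have hlog : 0 < Real.log C₀ := Real.log_pos hC₀
  have hKpos : 0 < K := by rw [hKdef]; positivity
  have hRpos : 0 < R := by rw [hRdef]; nlinarith [sq_nonneg α]
  have hBpos : 0 < B := by rw [hBdef]; nlinarith
  refine ⟨(B*θ+1)⁻¹, by positivity, 2*Z⁻¹*θ^(α-(1:ℝ)) + 1, by positivity, ?_⟩
  intro ε hε hεle ζ hsol T hT
  have hcont := hsol.1
  have hnonneg := hsol.2.2.2.1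
  set Ssup := sSup ((fun τ' => ζ τ' θ) '' Set.Icc (0:ℝ) T) with hSsupdef
  set M := max (2*Z⁻¹*θ^(α-(1:ℝ)) + 1) (2/θ * Ssup) with hMdef
  have hbdd : BddAbove ((fun τ' => ζ τ' θ) '' Set.Icc (0:ℝ) T) := by
    apply IsCompact.bddAbove_image isCompact_Icc
    have h1 : ContinuousOn (fun t : ℝ => ((t, θ) : ℝ×ℝ)) (Set.Icc 0 T) :=
      (continuous_id.prodMk continuous_const).continuousOn
    exact hcont.comp h1 (fun t ht => ⟨ht.1, hθpos.le⟩)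
  have hSsup0 : 0 ≤ Ssup := by
    have h0 : ζ 0 θ ∈ (fun τ' => ζ τ' θ) '' Set.Icc (0:ℝ) T :=
      Set.mem_image_of_mem _ (Set.left_mem_Icc.mpr hT.le)
    exact le_trans (hnonneg 0 (le_refl 0) θ hθpos.le) (le_csSup hbdd h0)
  have hSb : ∀ τ ∈ Set.Icc (0:ℝ) T, ζ τ θ ≤ M*(θ/2) := by
    intro τ hτ
    have h1 : ζ τ θ ≤ Ssup := le_csSup hbdd (Set.mem_image_of_mem _ hτ)
    have h2 : 2/θ * Ssup ≤ M := le_max_right _ _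
    have h3 : (2/θ*Ssup)*(θ/2) = Ssup := by field_simp
    calc ζ τ θ ≤ Ssup := h1
      _ = (2/θ*Ssup)*(θ/2) := h3.symm
      _ ≤ M*(θ/2) := mul_le_mul_of_nonneg_right h2 (by positivity)
  have hMpos : 0 < M := lt_of_lt_of_le (by positivity) (le_max_left _ _)
  have hMQ : 2*Z⁻¹*θ^(α-(1:ℝ)) ≤ M := by
    have := le_max_left (2*Z⁻¹*θ^(α-(1:ℝ)) + 1) (2/θ * Ssup)
    linarith
  have hεB : ε*(B*θ) ≤ 1 := by
    have h4 : (0:ℝ) < B*θ+1 := by positivity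
    have h5 : ε*(B*θ) ≤ (B*θ+1)⁻¹*(B*θ) :=
      mul_le_mul_of_nonneg_right hεle (by positivity)
    have h6 : (B*θ+1)⁻¹*(B*θ) ≤ 1 := by
      rw [inv_mul_le_iff₀ h4]
      nlinarith [mul_pos hBpos hθpos]
    exact le_trans h5 h6
  intro τ hτ y hy
  have key : ∀ η, 0 < η → η*(2*α+1) ≤ 2*ε → ζ τ y < M*((y - ε*B*y^2/2) + η) :=
    fun η hη hη2 => main_bound A α Z C₀ ε T M η θ K R B hA hα hC₀ hZ hθdef hKdef
      hRdef hBdef hε hεB hT ζ hsol hη hη2 hMpos hMQ hSb τ hτ y hy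
  have hle : ∀ δ, 0 < δ → ζ τ y ≤ M*y + δ := by
    intro δ hδ
    set η := min (2*ε/(2*α+1)) (δ/M) with hηdef
    have hη : 0 < η := lt_min (by positivity) (div_pos hδ hMpos)
    have hη2 : η*(2*α+1) ≤ 2*ε := by
      have h1 : η ≤ 2*ε/(2*α+1) := min_le_left _ _
      have h2 : η*(2*α+1) ≤ (2*ε/(2*α+1))*(2*α+1) :=
        mul_le_mul_of_nonneg_right h1 (by linarith)
      have h3 : (2*ε/(2*α+1))*(2*α+1) = 2*ε := by field_simp
      linarith
    have h6 := key η hη hη2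
    have h7 : M*((y - ε*B*y^2/2) + η) ≤ M*(y + η) := by
      apply mul_le_mul_of_nonneg_left _ hMpos.le
      have h10 : 0 ≤ ε*B*y^2/2 := by positivity
      linarith
    have h8 : M*η ≤ δ := by
      have h9 : η ≤ δ/M := min_le_right _ _
      rw [le_div_iff₀ hMpos] at h9
      linarith
    nlinarith [h6, h7, h8]
  by_contra hfin
  push_neg at hfin
  have := hle ((ζ τ y - M*y)/2) (by linarith)
  linarith
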